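/- Let f : ℝ^d → ℝ be continuously differentiable and let x ∈ ℝ^d be a critical point of f (∇f(x) = 0) such that f is twice continuously differentiable in a neighborhood of x. If the Hessian matrix H = ∇²f(x) has at least one negative eigenvalue, then x is not p-critical: there exists p > 0 such that ξ_p^f(x) > 0 (indeed, liminf_{σ → 0+} p_f^<(x, σ) > 0). -/

import Mathlib

open MeasureTheory Set Filter

/-- Isotropic Gaussian measure `N(m, σ²I)` on `ℝ^d`, defined by its density
`x ↦ (2π)^{-d/2} σ^{-d} exp(−‖x−m‖²/(2σ²))` w.r.t. Lebesgue measure. -/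
noncomputable def gaussES (d : ℕ) (m : EuclideanSpace ℝ (Fin d)) (σ : ℝ) :
    Measure (EuclideanSpace ℝ (Fin d)) :=
  volume.withDensity fun x =>
    ENNReal.ofReal ((2 * Real.pi) ^ (-(d : ℝ) / 2) * (σ ^ d)⁻¹ *
      Real.exp (-‖x - m‖ ^ 2 / (2 * σ ^ 2)))

/-- Success probability of strict improvement: `p_f^<(m,σ)`. -/
noncomputable def pLt (d : ℕ) (f : EuclideanSpace ℝ (Fin d) → ℝ)
    (m : EuclideanSpace ℝ (Fin d)) (σ : ℝ) : ENNReal :=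
  gaussES d m σ {x | f x < f m}

/-- Success probability of weak improvement: `p_f^≤(m,σ)`. -/
noncomputable def pLe (d : ℕ) (f : EuclideanSpace ℝ (Fin d) → ℝ)
    (m : EuclideanSpace ℝ (Fin d)) (σ : ℝ) : ENNReal :=
  gaussES d m σ {x | f x ≤ f m}

/-- Lower step-size threshold `ξ_p^f(m) = inf {σ > 0 | p_f^<(m,σ) ≤ p}`, with `inf ∅ = ∞`. -/
noncomputable def xiES (d : ℕ) (f : EuclideanSpace ℝ (Fin d) → ℝ) (p : ℝ)
    (m : EuclideanSpace ℝ (Fin d)) : ENNReal :=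
  sInf {s : ENNReal | ∃ σ : ℝ, 0 < σ ∧ s = ENNReal.ofReal σ ∧ pLt d f m σ ≤ ENNReal.ofReal p}

/-- Upper step-size threshold `η_p^f(m) = sup {σ > 0 | p_f^≤(m,σ) ≥ p}`, with `sup ∅ = 0`. -/
noncomputable def etaES (d : ℕ) (f : EuclideanSpace ℝ (Fin d) → ℝ) (p : ℝ)
    (m : EuclideanSpace ℝ (Fin d)) : ENNReal :=
  sSup {s : ENNReal | ∃ σ : ℝ, 0 < σ ∧ s = ENNReal.ofReal σ ∧ ENNReal.ofReal p ≤ pLe d f m σ}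

/-- Let `x` be a critical point of a continuously differentiable `f`
which is twice continuously differentiable in a neighborhood of `x`. If the Hessian
at `x` has a negative eigenvalue (witnessed by a direction `v` with negative second
derivative), then `x` is not `p`-critical: the success probability stays bounded away
from zero as `σ → 0⁺`, and `ξ_p^f(x) > 0` for some `p > 0`. -/
lemma coneAnalysis {d : ℕ} {f : EuclideanSpace ℝ (Fin d) → ℝ} (hf : ContDiff ℝ 1 f)
    {x : EuclideanSpace ℝ (Fin d)} (hx : gradient f x = 0)
    {U : Set (EuclideanSpace ℝ (Fin d))} (hU : U ∈ nhds x) (hf2 : ContDiffOn ℝ 2 f U)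
    {v : EuclideanSpace ℝ (Fin d)} (hv : iteratedFDeriv ℝ 2 f x ![v, v] < 0) :
    ∃ ε > 0, ε ≤ ‖v‖ / 2 ∧ ∃ δ' > 0,
      ∀ u : EuclideanSpace ℝ (Fin d), ‖u - v‖ < ε → ∀ t : ℝ, 0 < t → t < δ' →
        f (x + t • u) < f x := by
  have hQ : fderiv ℝ (fderiv ℝ f) x v v < 0 := by
    rw [iteratedFDeriv_two_apply] at hv; simpa using hv
  have hvne : v ≠ 0 := by rintro rfl; simp at hQ
  have hvpos : 0 < ‖v‖ := norm_pos_iff.2 hvne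
  obtain ⟨r, hr, hball⟩ := Metric.mem_nhds_iff.1 hU
  have hf2' : ContDiffOn ℝ 2 f (Metric.ball x r) := hf2.mono hball
  have hd1 : ContDiffOn ℝ 1 (fderiv ℝ f) (Metric.ball x r) :=
    hf2'.fderiv_of_isOpen Metric.isOpen_ball (by norm_num)
  have hdiffB : ∀ y ∈ Metric.ball x r, HasFDerivAt (fderiv ℝ f) (fderiv ℝ (fderiv ℝ f) y) y :=
    fun y hy => ((hd1.differentiableOn one_ne_zero).differentiableAt
      (Metric.isOpen_ball.mem_nhds hy)).hasFDerivAt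
  have hcontB : ContinuousOn (fderiv ℝ (fderiv ℝ f)) (Metric.ball x r) :=
    hd1.continuousOn_fderiv_of_isOpen Metric.isOpen_ball le_rfl
  have hBx : ContinuousAt (fderiv ℝ (fderiv ℝ f)) x :=
    hcontB.continuousAt (Metric.isOpen_ball.mem_nhds (Metric.mem_ball_self hr))
  have happly : Continuous fun q : ((EuclideanSpace ℝ (Fin d) →L[ℝ]
      EuclideanSpace ℝ (Fin d) →L[ℝ] ℝ) × EuclideanSpace ℝ (Fin d)) => q.1 q.2 :=
    isBoundedBilinearMap_apply.continuous
  have happly2 : Continuous fun q : ((EuclideanSpace ℝ (Fin d) →L[ℝ] ℝ) ×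
      EuclideanSpace ℝ (Fin d)) => q.1 q.2 := isBoundedBilinearMap_apply.continuous
  have hG : ContinuousAt (fun p : EuclideanSpace ℝ (Fin d) × EuclideanSpace ℝ (Fin d) =>
      fderiv ℝ (fderiv ℝ f) p.1 p.2 p.2) (x, v) := by
    have h1 : ContinuousAt (fun p : EuclideanSpace ℝ (Fin d) × EuclideanSpace ℝ (Fin d) =>
        (fderiv ℝ (fderiv ℝ f) p.1) p.2) (x, v) :=
      happly.continuousAt.comp (f := fun p : EuclideanSpace ℝ (Fin d) × EuclideanSpace ℝ (Fin d) =>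
        (fderiv ℝ (fderiv ℝ f) p.1, p.2)) (ContinuousAt.prodMk (hBx.comp continuousAt_fst) continuousAt_snd)
    exact happly2.continuousAt.comp (f := fun p : EuclideanSpace ℝ (Fin d) × EuclideanSpace ℝ (Fin d) =>
      (fderiv ℝ (fderiv ℝ f) p.1 p.2, p.2)) (h1.prodMk continuousAt_snd)
  have hc0 : fderiv ℝ (fderiv ℝ f) x v v / 2 < 0 := by linarith
  have hmem : {p : EuclideanSpace ℝ (Fin d) × EuclideanSpace ℝ (Fin d) |
      fderiv ℝ (fderiv ℝ f) p.1 p.2 p.2 < fderiv ℝ (fderiv ℝ f) x v v / 2} ∈ nhds (x, v) :=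
    hG (Iio_mem_nhds (by linarith))
  rw [nhds_prod_eq] at hmem
  obtain ⟨s₁, hs₁, t₁, ht₁, hst⟩ := Filter.mem_prod_iff.1 hmem
  obtain ⟨δ₀, hδ₀, hδb⟩ := Metric.mem_nhds_iff.1 hs₁
  obtain ⟨ε₀, hε₀, hεb⟩ := Metric.mem_nhds_iff.1 ht₁
  refine ⟨min ε₀ (‖v‖/2), by positivity, min_le_right _ _, ?_⟩
  have hδpos : 0 < min δ₀ r := lt_min hδ₀ hr
  refine ⟨min δ₀ r / (2 * ‖v‖), by positivity, ?_⟩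
  intro u hu t ht htδ
  have hunorm : ‖u‖ ≤ 3/2 * ‖v‖ := by
    have h1 : ‖u‖ - ‖v‖ ≤ ‖u - v‖ := norm_sub_norm_le u v
    have h2 : ‖u - v‖ < ‖v‖/2 := lt_of_lt_of_le hu (min_le_right _ _)
    linarith
  have hin : ∀ a : ℝ, 0 ≤ a → a ≤ t → ‖a • u‖ < min δ₀ r := by
    intro a ha0 hat
    rw [norm_smul, Real.norm_eq_abs, abs_of_nonneg ha0]
    have h1 : a * ‖u‖ ≤ t * (3/2*‖v‖) :=
      mul_le_mul hat hunorm (norm_nonneg u) (le_trans ha0 hat)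
    have h2 : t * (3/2*‖v‖) < (min δ₀ r/(2*‖v‖)) * (3/2*‖v‖) := by
      apply mul_lt_mul_of_pos_right htδ; positivity
    have h3 : (min δ₀ r/(2*‖v‖)) * (3/2*‖v‖) = 3/4 * min δ₀ r := by
      field_simp; ring
    linarith
  have hinr : ∀ a : ℝ, 0 ≤ a → a ≤ t → x + a • u ∈ Metric.ball x r := by
    intro a h1 h2
    rw [Metric.mem_ball, dist_eq_norm, add_sub_cancel_left]
    exact lt_of_lt_of_le (hin a h1 h2) (min_le_right _ _)
  have hGlt : ∀ a : ℝ, 0 ≤ a → a ≤ t →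
      fderiv ℝ (fderiv ℝ f) (x + a • u) u u < fderiv ℝ (fderiv ℝ f) x v v / 2 := by
    intro a h1 h2
    have hm1 : x + a • u ∈ Metric.ball x δ₀ := by
      rw [Metric.mem_ball, dist_eq_norm, add_sub_cancel_left]
      exact lt_of_lt_of_le (hin a h1 h2) (min_le_left _ _)
    have hm2 : u ∈ Metric.ball v ε₀ := by
      rw [Metric.mem_ball, dist_eq_norm]
      exact lt_of_lt_of_le hu (min_le_left _ _)
    have hmem1 : (x + a • u, u) ∈ s₁ ×ˢ t₁ := ⟨hδb hm1, hεb hm2⟩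
    exact hst hmem1
  have hlineDeriv : ∀ a : ℝ, HasDerivAt (fun a : ℝ => x + a • u) u a := by
    intro a; simpa using ((hasDerivAt_id a).smul_const u).const_add x
  have hg : ∀ a : ℝ, HasDerivAt (fun a => f (x + a • u)) (fderiv ℝ f (x + a • u) u) a :=
    fun a => ((hf.differentiable one_ne_zero _).hasFDerivAt).comp_hasDerivAt a (hlineDeriv a)
  have hg1 : ∀ a : ℝ, 0 ≤ a → a ≤ t → HasDerivAt (fun a => fderiv ℝ f (x + a • u) u)
      (fderiv ℝ (fderiv ℝ f) (x + a • u) u u) a := by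
    intro a h1 h2
    have h3 := (hdiffB _ (hinr a h1 h2)).comp_hasDerivAt a (hlineDeriv a)
    exact (ContinuousLinearMap.apply ℝ ℝ u).hasFDerivAt.comp_hasDerivAt a h3
  obtain ⟨η, hη, hslope1⟩ := exists_hasDerivAt_eq_slope (fun a => f (x + a • u))
    (fun a => fderiv ℝ f (x + a • u) u) ht
    (fun a _ => (hg a).continuousAt.continuousWithinAt) (fun a _ => hg a)
  obtain ⟨ξ, hξ, hslope2⟩ := exists_hasDerivAt_eq_slope (fun a => fderiv ℝ f (x + a • u) u)
    (fun a => fderiv ℝ (fderiv ℝ f) (x + a • u) u u) hη.1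
    (fun a ha => ((hg1 a ha.1 (le_trans ha.2 hη.2.le)).continuousAt.continuousWithinAt))
    (fun a ha => hg1 a ha.1.le (le_trans ha.2.le hη.2.le))
  have h0 : fderiv ℝ f (x + (0:ℝ) • u) u = 0 := by
    have hfd0 : fderiv ℝ f x = 0 := by
      have h := congrArg (InnerProductSpace.toDual ℝ (EuclideanSpace ℝ (Fin d))) hx
      simpa [gradient] using h
    simp [hfd0]
  have hBξ : fderiv ℝ (fderiv ℝ f) (x + ξ • u) u u < fderiv ℝ (fderiv ℝ f) x v v / 2 :=
    hGlt ξ hξ.1.le (le_trans hξ.2.le hη.2.le)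
  rw [h0, sub_zero, sub_zero] at hslope2
  have hfη : fderiv ℝ f (x + η • u) u = fderiv ℝ (fderiv ℝ f) (x + ξ • u) u u * η := by
    rw [hslope2, div_mul_cancel₀ _ (ne_of_gt hη.1)]
  have hfηneg : fderiv ℝ f (x + η • u) u < 0 := by
    rw [hfη]
    exact mul_neg_of_neg_of_pos (lt_trans hBξ hc0) hη.1
  rw [sub_zero] at hslope1
  have h6 : f (x + (0:ℝ) • u) = f x := by simp
  rw [h6] at hslope1
  have h7 : f (x + t • u) - f x = fderiv ℝ f (x + η • u) u * t :=
    (div_eq_iff (ne_of_gt ht)).1 hslope1.symm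
  nlinarith [mul_neg_of_neg_of_pos hfηneg ht]

lemma gaussDens_meas (d : ℕ) (b : EuclideanSpace ℝ (Fin d)) (s : ℝ) :
    Measurable fun y : EuclideanSpace ℝ (Fin d) =>
      ENNReal.ofReal ((2 * Real.pi) ^ (-(d : ℝ) / 2) * (s ^ d)⁻¹ *
        Real.exp (-‖y - b‖ ^ 2 / (2 * s ^ 2))) := by
  apply Measurable.ennreal_ofReal
  apply Measurable.const_mul
  apply (Real.continuous_exp.comp ?_).measurable
  exact (((continuous_id.sub continuous_const).norm.pow 2).neg).div_const _

lemma gauss_change (d : ℕ) (x : EuclideanSpace ℝ (Fin d)) {σ : ℝ} (hσ : 0 < σ)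
    {T : Set (EuclideanSpace ℝ (Fin d))} (hT : MeasurableSet T) :
    gaussES d x σ ((fun y => y - x) ⁻¹' T) = gaussES d 0 1 ((fun z => σ • z) ⁻¹' T) := by
  have hA : MeasurableSet ((fun y : EuclideanSpace ℝ (Fin d) => y - x) ⁻¹' T) :=
    (measurable_id.sub measurable_const) hT
  have hS : MeasurableSet ((fun z : EuclideanSpace ℝ (Fin d) => σ • z) ⁻¹' T) :=
    (continuous_const_smul σ).measurable hT
  rw [gaussES, gaussES, withDensity_apply _ hA, withDensity_apply _ hS]
  have hmeas1 : Measurable fun y : EuclideanSpace ℝ (Fin d) =>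
      ENNReal.ofReal ((2 * Real.pi) ^ (-(d : ℝ) / 2) * (σ ^ d)⁻¹ *
        Real.exp (-‖y - x‖ ^ 2 / (2 * σ ^ 2))) := gaussDens_meas d x σ
  have hmeas2 : Measurable fun z : EuclideanSpace ℝ (Fin d) =>
      ENNReal.ofReal ((2 * Real.pi) ^ (-(d : ℝ) / 2) * ((1:ℝ) ^ d)⁻¹ *
        Real.exp (-‖z - 0‖ ^ 2 / (2 * 1 ^ 2))) := gaussDens_meas d 0 1
  -- step 1 : translation
  have step1 : ∫⁻ y in (fun y => y - x) ⁻¹' T,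
      ENNReal.ofReal ((2 * Real.pi) ^ (-(d : ℝ) / 2) * (σ ^ d)⁻¹ *
        Real.exp (-‖y - x‖ ^ 2 / (2 * σ ^ 2))) ∂volume
      = ∫⁻ h in T, ENNReal.ofReal ((2 * Real.pi) ^ (-(d : ℝ) / 2) * (σ ^ d)⁻¹ *
        Real.exp (-‖h‖ ^ 2 / (2 * σ ^ 2))) ∂volume := by
    conv_lhs => rw [← map_add_left_eq_self volume x]
    rw [setLIntegral_map hA hmeas1 (measurable_const_add x)]
    have hpre : (fun h => x + h) ⁻¹' ((fun y => y - x) ⁻¹' T) = T := by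
      ext h; simp [add_sub_cancel_left]
    rw [hpre]
    apply lintegral_congr
    intro h
    rw [add_sub_cancel_left]
  rw [step1]
  -- step 2 : pointwise rescale of density
  have step2 : ∀ h : EuclideanSpace ℝ (Fin d),
      ENNReal.ofReal ((2 * Real.pi) ^ (-(d : ℝ) / 2) * (σ ^ d)⁻¹ *
        Real.exp (-‖h‖ ^ 2 / (2 * σ ^ 2)))
      = ENNReal.ofReal ((σ ^ d)⁻¹) *
        ENNReal.ofReal ((2 * Real.pi) ^ (-(d : ℝ) / 2) * ((1:ℝ) ^ d)⁻¹ *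
          Real.exp (-‖σ⁻¹ • h - 0‖ ^ 2 / (2 * 1 ^ 2))) := by
    intro h
    rw [← ENNReal.ofReal_mul (by positivity)]
    congr 1
    have hσ' : (σ:ℝ) ≠ 0 := ne_of_gt hσ
    have hn : -‖σ⁻¹ • h - 0‖ ^ 2 / (2 * (1:ℝ) ^ 2) = -‖h‖ ^ 2 / (2 * σ ^ 2) := by
      rw [sub_zero, norm_smul, Real.norm_eq_abs, abs_of_pos (inv_pos.2 hσ), mul_pow, one_pow,
        mul_one, inv_pow, neg_div, neg_div, neg_inj, div_eq_div_iff two_ne_zero (by positivity)]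
      field_simp
    rw [hn]
    ring
  simp_rw [step2]
  have hmeas3 : Measurable fun h : EuclideanSpace ℝ (Fin d) =>
      ENNReal.ofReal ((2 * Real.pi) ^ (-(d : ℝ) / 2) * ((1:ℝ) ^ d)⁻¹ *
        Real.exp (-‖σ⁻¹ • h - 0‖ ^ 2 / (2 * 1 ^ 2))) :=
    hmeas2.comp (continuous_const_smul σ⁻¹).measurable
  rw [lintegral_const_mul _ hmeas3]
  -- step 3 : scaling change of variables
  have hmap : Measure.map (fun h : EuclideanSpace ℝ (Fin d) => σ⁻¹ • h) volume
      = ENNReal.ofReal (σ ^ d) • volume := by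
    rw [Measure.map_addHaar_smul volume (inv_ne_zero (ne_of_gt hσ))]
    congr 1
    rw [finrank_euclideanSpace_fin]
    rw [← inv_pow, inv_inv, abs_of_pos (pow_pos hσ d)]
  have step3 : ∫⁻ h in T,
      ENNReal.ofReal ((2 * Real.pi) ^ (-(d : ℝ) / 2) * ((1:ℝ) ^ d)⁻¹ *
        Real.exp (-‖σ⁻¹ • h - 0‖ ^ 2 / (2 * 1 ^ 2))) ∂volume
      = ENNReal.ofReal (σ ^ d) * ∫⁻ z in (fun z => σ • z) ⁻¹' T,
        ENNReal.ofReal ((2 * Real.pi) ^ (-(d : ℝ) / 2) * ((1:ℝ) ^ d)⁻¹ *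
          Real.exp (-‖z - 0‖ ^ 2 / (2 * 1 ^ 2))) ∂volume := by
    have h1 := setLIntegral_map (μ := volume) hS hmeas2
      ((continuous_const_smul σ⁻¹).measurable)
    rw [hmap] at h1
    rw [Measure.restrict_smul, lintegral_smul_measure] at h1
    have hpre : (fun h : EuclideanSpace ℝ (Fin d) => σ⁻¹ • h) ⁻¹' ((fun z => σ • z) ⁻¹' T)
        = T := by
      ext h
      simp [smul_smul, mul_inv_cancel₀ (ne_of_gt hσ)]
    rw [hpre] at h1
    exact h1.symm
  rw [step3, ← mul_assoc, ← ENNReal.ofReal_mul (by positivity),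
    inv_mul_cancel₀ (ne_of_gt (pow_pos hσ d)), ENNReal.ofReal_one, one_mul]

lemma gauss_univ_lt_top (d : ℕ) : gaussES d 0 1 univ < ⊤ := by
  rw [gaussES, withDensity_apply _ MeasurableSet.univ, Measure.restrict_univ]
  have hint : Integrable (fun z : EuclideanSpace ℝ (Fin d) =>
      Real.exp (-(1/2 : ℝ) * ‖z‖ ^ 2)) volume := by
    have h := (GaussianFourier.integrable_cexp_neg_mul_sq_norm_add (V := EuclideanSpace ℝ (Fin d))
      (b := (1/2 : ℂ)) (by norm_num) 0 0).norm
    refine h.congr (Filter.Eventually.of_forall fun z => ?_)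
    simp [Complex.norm_exp, ← Complex.ofReal_pow]
  have h2 := (hint.const_mul ((2 * Real.pi) ^ (-(d : ℝ) / 2))).lintegral_lt_top
  refine lt_of_le_of_lt (le_of_eq ?_) h2
  apply lintegral_congr
  intro z
  congr 1
  rw [sub_zero, one_pow, inv_one, mul_one]
  congr 1
  ring

theorem saddle_point_not_critical
    (d : ℕ) (hd : 1 ≤ d)
    (f : EuclideanSpace ℝ (Fin d) → ℝ) (hf : ContDiff ℝ 1 f)
    (x : EuclideanSpace ℝ (Fin d)) (hx : gradient f x = 0)
    (U : Set (EuclideanSpace ℝ (Fin d))) (hU : U ∈ nhds x) (hf2 : ContDiffOn ℝ 2 f U)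
    (v : EuclideanSpace ℝ (Fin d)) (hv : iteratedFDeriv ℝ 2 f x ![v, v] < 0) :
    (∃ p : ℝ, 0 < p ∧ 0 < xiES d f p x) ∧
    0 < Filter.liminf (fun σ : ℝ => (pLt d f x σ).toReal) (nhdsWithin 0 (Ioi 0)) := by
  obtain ⟨ε, hε, hεv, δ', hδ', hcone⟩ := coneAnalysis hf hx hU hf2 hv
  have hvne : v ≠ 0 := by
    rintro rfl
    simp only [norm_zero] at hεv
    linarith
  have hvpos : 0 < ‖v‖ := norm_pos_iff.2 hvne
  -- the cone
  set C : Set (EuclideanSpace ℝ (Fin d)) :=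
    ⋃ t ∈ Ioi (0:ℝ), Metric.ball (t • v) (t * ε) with hC
  have hCopen : IsOpen C := isOpen_biUnion fun t _ => Metric.isOpen_ball
  set δ₁ : ℝ := δ' * ‖v‖ / 2 with hδ₁
  have hδ₁pos : 0 < δ₁ := by positivity
  set S : Set (EuclideanSpace ℝ (Fin d)) := C ∩ Metric.ball 0 δ₁ with hSdef
  have hSopen : IsOpen S := hCopen.inter Metric.isOpen_ball
  have hSmeas : MeasurableSet S := hSopen.measurableSet
  -- points of the truncated cone improve f
  have hSlt : ∀ h ∈ S, f (x + h) < f x := by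
    rintro h ⟨hhC, hhb⟩
    rw [mem_ball_zero_iff] at hhb
    simp only [hC, mem_iUnion, exists_prop, mem_Ioi] at hhC
    obtain ⟨t, ht, hball⟩ := hhC
    rw [Metric.mem_ball, dist_eq_norm] at hball
    have htv : t * ‖v‖ - ‖h‖ ≤ ‖h - t • v‖ := by
      have h1 := norm_sub_norm_le (t • v) h
      rw [norm_smul, Real.norm_eq_abs, abs_of_pos ht, ← norm_neg (t • v - h), neg_sub] at h1
      linarith
    have htb : t < δ' := by nlinarith
    have huv : ‖t⁻¹ • h - v‖ < ε := by
      have he : t⁻¹ • h - v = t⁻¹ • (h - t • v) := by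
        rw [smul_sub, smul_smul, inv_mul_cancel₀ (ne_of_gt ht), one_smul]
      rw [he, norm_smul, Real.norm_eq_abs, abs_of_pos (inv_pos.2 ht), inv_mul_lt_iff₀ ht]
      exact hball
    have hres := hcone (t⁻¹ • h) huv t ht htb
    rwa [smul_smul, mul_inv_cancel₀ (ne_of_gt ht), one_smul] at hres
  -- the cone is scaling invariant downwards
  have hSscale : ∀ σ : ℝ, 0 < σ → σ ≤ 1 → ∀ z ∈ S, σ • z ∈ S := by
    rintro σ hσ hσ1 z ⟨hzC, hzb⟩
    constructor
    · simp only [hC, mem_iUnion, exists_prop, mem_Ioi] at hzC ⊢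
      obtain ⟨t, ht, hball⟩ := hzC
      rw [Metric.mem_ball, dist_eq_norm] at hball
      refine ⟨σ * t, by positivity, ?_⟩
      rw [Metric.mem_ball, dist_eq_norm]
      have he : σ • z - (σ * t) • v = σ • (z - t • v) := by
        rw [smul_sub, smul_smul]
      rw [he, norm_smul, Real.norm_eq_abs, abs_of_pos hσ, mul_assoc]
      exact mul_lt_mul_of_pos_left hball hσ
    · rw [mem_ball_zero_iff] at hzb ⊢
      rw [norm_smul, Real.norm_eq_abs, abs_of_pos hσ]
      calc σ * ‖z‖ ≤ 1 * ‖z‖ := mul_le_mul_of_nonneg_right hσ1 (norm_nonneg z)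
      _ = ‖z‖ := one_mul _
      _ < δ₁ := hzb
  set κ : ENNReal := gaussES d 0 1 S with hκ
  set M : ENNReal := gaussES d 0 1 univ with hM
  have hMfin : M < ⊤ := gauss_univ_lt_top d
  have hκfin : κ < ⊤ := lt_of_le_of_lt (measure_mono (subset_univ S)) hMfin
  -- the main lower bound : for 0 < σ ≤ 1, κ ≤ pLt d f x σ
  have hmain : ∀ σ : ℝ, 0 < σ → σ ≤ 1 → κ ≤ pLt d f x σ := by
    intro σ hσ hσ1
    have h1 : ((fun y => y - x) ⁻¹' S) ⊆ {y | f y < f x} := by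
      intro y hy
      have h2 := hSlt _ hy
      have h3 : x + (y - x) = y := by abel
      rwa [h3] at h2
    have h2 : S ⊆ ((fun z => σ • z) ⁻¹' S) := fun z hz => hSscale σ hσ hσ1 z hz
    calc κ ≤ gaussES d 0 1 ((fun z => σ • z) ⁻¹' S) := measure_mono h2
    _ = gaussES d x σ ((fun y => y - x) ⁻¹' S) := (gauss_change d x hσ hSmeas).symm
    _ ≤ pLt d f x σ := measure_mono h1
  -- upper bound : pLt d f x σ ≤ M for σ > 0
  have hub : ∀ σ : ℝ, 0 < σ → pLt d f x σ ≤ M := by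
    intro σ hσ
    have h1 : gaussES d x σ univ = M := by
      have h2 := gauss_change d x hσ (T := univ) MeasurableSet.univ
      simpa using h2
    exact le_trans (measure_mono (subset_univ _)) (le_of_eq h1)
  -- κ is positive
  have hκpos : 0 < κ := by
    have hne : ((δ₁ / (2 * ‖v‖)) • v) ∈ S := by
      constructor
      · simp only [hC, mem_iUnion, exists_prop, mem_Ioi]
        exact ⟨δ₁ / (2 * ‖v‖), by positivity, Metric.mem_ball_self (by positivity)⟩
      · rw [mem_ball_zero_iff, norm_smul, Real.norm_eq_abs, abs_of_pos (by positivity),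
          div_mul_eq_mul_div, mul_comm, div_lt_iff₀ (by positivity)]
        nlinarith
    obtain ⟨ρ, hρ, hρball⟩ := Metric.isOpen_iff.1 hSopen _ hne
    set h₀ := (δ₁ / (2 * ‖v‖)) • v with hh₀
    set R : ℝ := ‖h₀‖ + ρ with hR
    set m₀ : ENNReal := ENNReal.ofReal ((2 * Real.pi) ^ (-(d : ℝ) / 2) * ((1:ℝ) ^ d)⁻¹ *
      Real.exp (-R ^ 2 / (2 * 1 ^ 2))) with hm₀
    have hlow : ∀ z ∈ Metric.ball h₀ ρ, m₀
        ≤ ENNReal.ofReal ((2 * Real.pi) ^ (-(d : ℝ) / 2) * ((1:ℝ) ^ d)⁻¹ *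
          Real.exp (-‖z - 0‖ ^ 2 / (2 * 1 ^ 2))) := by
      intro z hz
      apply ENNReal.ofReal_le_ofReal
      apply mul_le_mul_of_nonneg_left _ (by positivity)
      apply Real.exp_le_exp.2
      rw [sub_zero]
      have hzR : ‖z‖ ≤ R := by
        rw [Metric.mem_ball, dist_eq_norm] at hz
        have h1 := norm_sub_norm_le z h₀
        rw [hR]; linarith
      have h2 : ‖z‖ ^ 2 ≤ R ^ 2 := by nlinarith [norm_nonneg z]
      apply div_le_div_of_nonneg_right _ (by norm_num)
      linarith
    have hb2 : gaussES d 0 1 (Metric.ball h₀ ρ) =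
        ∫⁻ z in Metric.ball h₀ ρ, ENNReal.ofReal ((2 * Real.pi) ^ (-(d : ℝ) / 2) *
          ((1:ℝ) ^ d)⁻¹ * Real.exp (-‖z - 0‖ ^ 2 / (2 * 1 ^ 2))) ∂volume :=
      withDensity_apply _ Metric.isOpen_ball.measurableSet
    have hb3 : m₀ * volume (Metric.ball h₀ ρ) ≤ gaussES d 0 1 (Metric.ball h₀ ρ) := by
      rw [hb2, ← setLIntegral_const]
      exact setLIntegral_mono (gaussDens_meas d 0 1) hlow
    have hm₀pos : 0 < m₀ := by
      rw [hm₀]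
      apply ENNReal.ofReal_pos.2
      positivity
    have hvol : 0 < volume (Metric.ball h₀ ρ) := Metric.measure_ball_pos volume h₀ hρ
    calc (0:ENNReal) < m₀ * volume (Metric.ball h₀ ρ) :=
        ENNReal.mul_pos (ne_of_gt hm₀pos) (ne_of_gt hvol)
    _ ≤ gaussES d 0 1 (Metric.ball h₀ ρ) := hb3
    _ ≤ κ := measure_mono hρball
  have hκt : 0 < κ.toReal := ENNReal.toReal_pos (ne_of_gt hκpos) hκfin.ne
  constructor
  · refine ⟨κ.toReal / 2, by linarith, ?_⟩
    have h1 : (1:ENNReal) ≤ xiES d f (κ.toReal / 2) x := by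
      apply le_sInf
      rintro s ⟨σ, hσ, hs, hps⟩
      rw [hs, ENNReal.one_le_ofReal]
      by_contra hcon
      push_neg at hcon
      have h2 : κ ≤ pLt d f x σ := hmain σ hσ hcon.le
      have h3 : ENNReal.ofReal (κ.toReal / 2) < κ := by
        rw [ENNReal.ofReal_lt_iff_lt_toReal (by linarith) hκfin.ne]
        linarith
      exact absurd (le_trans h2 hps) (not_le.2 h3)
    exact lt_of_lt_of_le zero_lt_one h1
  · have hev : ∀ᶠ σ in nhdsWithin (0:ℝ) (Ioi 0), σ ∈ Ioc (0:ℝ) 1 :=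
      Ioc_mem_nhdsGT_of_mem ⟨le_refl 0, zero_lt_one⟩
    have hubv : ∀ᶠ σ in nhdsWithin (0:ℝ) (Ioi 0), (pLt d f x σ).toReal ≤ M.toReal :=
      hev.mono fun σ hσ => ENNReal.toReal_mono hMfin.ne (hub σ hσ.1)
    have hlbv : ∀ᶠ σ in nhdsWithin (0:ℝ) (Ioi 0), κ.toReal ≤ (pLt d f x σ).toReal :=
      hev.mono fun σ hσ =>
        ENNReal.toReal_mono (ne_top_of_le_ne_top hMfin.ne (hub σ hσ.1)) (hmain σ hσ.1 hσ.2)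
    have hcb : IsCoboundedUnder (· ≥ ·) (nhdsWithin (0:ℝ) (Ioi 0))
        (fun σ => (pLt d f x σ).toReal) :=
      Filter.isCoboundedUnder_ge_of_eventually_le _ hubv
    exact lt_of_lt_of_le hκt (Filter.le_liminf_of_le hcb hlbv)
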